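/- A signed graph G has a unique Laplacian inertia (the same inertia triple for every consistent weighting) if and only if its flexibility τ = n + c − c₊ − c₋ equals 0, and in that case the unique Laplacian inertia is (c₊ − c, c₋ − c, c). -/

import Mathlib

open scoped Classical
open Polynomial

namespace SGPaper

/-- A weighted signed graph on `n` vertices, given by its symmetric hollow
matrix of edge weights (a nonzero entry `w i j` is the weight of the edge `ij`;
positive edges have positive weight, negative edges negative weight). -/
structure WSG (n : ℕ) where
  w : Matrix (Fin n) (Fin n) ℝ
  symm : w.IsSymm
  loopless : ∀ i, w i i = 0

variable {n : ℕ}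

/-- The underlying simple graph. -/
def WSG.graph (Γ : WSG n) : SimpleGraph (Fin n) :=
  SimpleGraph.fromRel (fun i j => Γ.w i j ≠ 0)

/-- The spanning subgraph of positive edges. -/
def WSG.posGraph (Γ : WSG n) : SimpleGraph (Fin n) :=
  SimpleGraph.fromRel (fun i j => 0 < Γ.w i j)

/-- The spanning subgraph of negative edges. -/
def WSG.negGraph (Γ : WSG n) : SimpleGraph (Fin n) :=
  SimpleGraph.fromRel (fun i j => Γ.w i j < 0)

/-- Number of connected components of a graph. -/
noncomputable def comps {V : Type*} (G : SimpleGraph V) : ℕ :=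
  Nat.card G.ConnectedComponent

/-- Weighted Laplacian `L = A - D`. -/
def WSG.lap (Γ : WSG n) : Matrix (Fin n) (Fin n) ℝ :=
  Γ.w - Matrix.diagonal (fun i => ∑ j, Γ.w i j)

theorem WSG.lap_isHermitian (Γ : WSG n) : Γ.lap.IsHermitian := by
  have h : Γ.lap.IsSymm := Γ.symm.sub (Matrix.isSymm_diagonal _)
  show Γ.lap.conjTranspose = Γ.lap
  rw [Matrix.conjTranspose_eq_transpose_of_trivial]
  exact h

/-- Number of positive eigenvalues of the Laplacian. -/
noncomputable def WSG.nPos (Γ : WSG n) : ℕ :=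
  (Finset.univ.filter fun i => 0 < Γ.lap_isHermitian.eigenvalues i).card

/-- Number of negative eigenvalues of the Laplacian. -/
noncomputable def WSG.nNeg (Γ : WSG n) : ℕ :=
  (Finset.univ.filter fun i => Γ.lap_isHermitian.eigenvalues i < 0).card

/-- Multiplicity of `0` as an eigenvalue of the Laplacian. -/
noncomputable def WSG.nZero (Γ : WSG n) : ℕ :=
  (Finset.univ.filter fun i => Γ.lap_isHermitian.eigenvalues i = 0).card

/-- The Laplacian inertia `(n₊, n₋, n₀)`. -/
noncomputable def WSG.inertia (Γ : WSG n) : ℕ × ℕ × ℕ := (Γ.nPos, Γ.nNeg, Γ.nZero)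

/-- A signed graph: a pair of edge-disjoint simple graphs of positive and
negative edges on the vertex set `Fin n`. -/
structure SignedGraph (n : ℕ) where
  pos : SimpleGraph (Fin n)
  neg : SimpleGraph (Fin n)
  disj : ∀ i j, ¬(pos.Adj i j ∧ neg.Adj i j)

/-- The underlying (unsigned) simple graph. -/
def SignedGraph.graph {n : ℕ} (G : SignedGraph n) : SimpleGraph (Fin n) := G.pos ⊔ G.neg

/-- `Γ` is a consistent weighting of the signed graph `G`: the positive edges of
`Γ` are exactly the positive edges of `G` and likewise for negative edges. -/
def Consistent {n : ℕ} (G : SignedGraph n) (Γ : WSG n) : Prop :=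
  Γ.posGraph = G.pos ∧ Γ.negGraph = G.neg

/-- `G` has the unique Laplacian inertia `T`: every consistent weighting of `G`
has Laplacian inertia `T`. -/
def HasUniqueInertia {n : ℕ} (G : SignedGraph n) (T : ℕ × ℕ × ℕ) : Prop :=
  ∀ Γ : WSG n, Consistent G Γ → Γ.inertia = T


open Matrix Finset
open scoped RealInnerProductSpace

section Toolkit


variable {n : ℕ}

lemma dot_sum_left {ι : Type*} (s : Finset ι) (f : ι → (Fin n → ℝ)) (y : Fin n → ℝ) :
    (∑ i ∈ s, f i) ⬝ᵥ y = ∑ i ∈ s, f i ⬝ᵥ y := by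
  simp only [dotProduct, Finset.sum_apply, Finset.sum_mul]
  exact Finset.sum_comm

lemma dot_sum_right {ι : Type*} (s : Finset ι) (f : ι → (Fin n → ℝ)) (y : Fin n → ℝ) :
    y ⬝ᵥ (∑ i ∈ s, f i) = ∑ i ∈ s, y ⬝ᵥ f i := by
  simp only [dotProduct, Finset.sum_apply, Finset.mul_sum]
  exact Finset.sum_comm

lemma smul_dot (c : ℝ) (x y : Fin n → ℝ) : (c • x) ⬝ᵥ y = c * (x ⬝ᵥ y) := by
  simp [dotProduct, Finset.mul_sum, smul_eq_mul, mul_assoc]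

lemma dot_smul' (c : ℝ) (x y : Fin n → ℝ) : x ⬝ᵥ (c • y) = c * (x ⬝ᵥ y) := by
  simp [dotProduct, Finset.mul_sum, smul_eq_mul]; ring_nf
  exact Finset.sum_congr rfl fun i _ => by ring

section Coord

variable (v : OrthonormalBasis (Fin n) ℝ (EuclideanSpace ℝ (Fin n)))

/-- The basis vectors as plain vectors. -/
noncomputable def bv (i : Fin n) : Fin n → ℝ := ⇑(v i)

/-- Coordinates with respect to an orthonormal basis, in dot-product form. -/
noncomputable def coord (x : Fin n → ℝ) (i : Fin n) : ℝ := bv v i ⬝ᵥ x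

lemma dot_basis (i j : Fin n) : bv v i ⬝ᵥ bv v j = if i = j then 1 else 0 := by
  have := orthonormal_iff_ite.mp v.orthonormal i j
  simpa [bv, PiLp.inner_apply, dotProduct, RCLike.inner_apply, mul_comm] using this

lemma coord_add (x y : Fin n → ℝ) (i : Fin n) :
    coord v (x + y) i = coord v x i + coord v y i := by
  simp [coord, dotProduct_add]

lemma coord_smul (c : ℝ) (x : Fin n → ℝ) (i : Fin n) :
    coord v (c • x) i = c * coord v x i := by
  simp [coord, dot_smul']

lemma coord_zero (i : Fin n) : coord v (0 : Fin n → ℝ) i = 0 := by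
  simp [coord]

lemma sum_coord_smul (x : Fin n → ℝ) : ∑ i, coord v x i • bv v i = x := by
  have hi : ∀ i, coord v x i = ⟪v i, (WithLp.toLp 2 x : EuclideanSpace ℝ (Fin n))⟫ := by
    intro i; simp [coord, bv, PiLp.inner_apply, dotProduct, RCLike.inner_apply, mul_comm]
  simp_rw [hi]
  simpa [bv] using congrArg (fun y : EuclideanSpace ℝ (Fin n) => (y : Fin n → ℝ))
    (v.sum_repr' (WithLp.toLp 2 x : EuclideanSpace ℝ (Fin n)))

lemma coord_sum_smul (a : Fin n → ℝ) (i : Fin n) :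
    coord v (∑ j, a j • bv v j) i = a i := by
  simp only [coord, dot_sum_right, dot_smul', dot_basis]
  rw [Finset.sum_eq_single i] <;> simp +contextual [Ne.symm]

lemma eq_zero_of_coord_eq_zero (x : Fin n → ℝ) (h : ∀ i, coord v x i = 0) : x = 0 := by
  have := sum_coord_smul v x
  simp only [h, zero_smul, Finset.sum_const_zero] at this
  exact this.symm

lemma dot_self_eq_sum_coord_sq (x : Fin n → ℝ) : x ⬝ᵥ x = ∑ i, coord v x i ^ 2 := by
  nth_rewrite 1 [← sum_coord_smul v x]
  rw [dot_sum_left]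
  refine Finset.sum_congr rfl fun i _ => ?_
  rw [smul_dot, sq]
  rfl

end Coord

lemma dot_self_nonneg' (x : Fin n → ℝ) : 0 ≤ x ⬝ᵥ x :=
  Finset.sum_nonneg fun i _ => mul_self_nonneg _

lemma dot_self_pos (x : Fin n → ℝ) (hx : x ≠ 0) : 0 < x ⬝ᵥ x := by
  rcases (dot_self_nonneg' x).lt_or_eq with h | h
  · exact h
  · exfalso; apply hx
    funext i
    have := (Finset.sum_eq_zero_iff_of_nonneg
      (fun i (_ : i ∈ Finset.univ) => mul_self_nonneg (x i))).mp h.symm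
    exact mul_self_eq_zero.mp (this i (Finset.mem_univ i))


section Eigen

variable (v : OrthonormalBasis (Fin n) ℝ (EuclideanSpace ℝ (Fin n)))
  (μ : Fin n → ℝ) {M : Matrix (Fin n) (Fin n) ℝ}

lemma mulVec_expand (hv : ∀ i, M *ᵥ bv v i = μ i • bv v i) (x : Fin n → ℝ) :
    M *ᵥ x = ∑ i, (μ i * coord v x i) • bv v i := by
  nth_rewrite 1 [← sum_coord_smul v x]
  rw [show M *ᵥ (∑ i, coord v x i • bv v i) = M.mulVecLin (∑ i, coord v x i • bv v i) from rfl,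
    map_sum]
  refine Finset.sum_congr rfl fun i _ => ?_
  rw [LinearMap.map_smul, Matrix.mulVecLin_apply, hv i, smul_smul, mul_comm]

lemma coord_mulVec (hv : ∀ i, M *ᵥ bv v i = μ i • bv v i) (x : Fin n → ℝ) (i : Fin n) :
    coord v (M *ᵥ x) i = μ i * coord v x i := by
  rw [mulVec_expand v μ hv, coord_sum_smul]

lemma form_expand (hv : ∀ i, M *ᵥ bv v i = μ i • bv v i) (x : Fin n → ℝ) :
    x ⬝ᵥ (M *ᵥ x) = ∑ i, μ i * coord v x i ^ 2 := by
  rw [mulVec_expand v μ hv, dot_sum_right]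
  refine Finset.sum_congr rfl fun i _ => ?_
  rw [dot_smul']
  have : x ⬝ᵥ bv v i = coord v x i := dotProduct_comm _ _
  rw [this, sq]; ring

lemma eigenvalue_eq_form (hv : ∀ i, M *ᵥ bv v i = μ i • bv v i) (i : Fin n) :
    μ i = bv v i ⬝ᵥ (M *ᵥ bv v i) := by
  rw [hv i, dot_smul', dot_basis]
  simp

/-- The subspace of vectors supported (in eigencoordinates) on `s`. -/
def coordSpace (s : Finset (Fin n)) : Submodule ℝ (Fin n → ℝ) where
  carrier := {x | ∀ i ∉ s, coord v x i = 0}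
  add_mem' := fun {a b} ha hb i hi => by rw [coord_add, ha i hi, hb i hi, add_zero]
  zero_mem' := fun i _ => coord_zero v i
  smul_mem' := fun c x hx i hi => by rw [coord_smul, hx i hi, mul_zero]

lemma mem_coordSpace {s : Finset (Fin n)} {x : Fin n → ℝ} :
    x ∈ coordSpace v s ↔ ∀ i ∉ s, coord v x i = 0 := Iff.rfl

/-- `coordSpace v s` is linearly equivalent to `s → ℝ`. -/
noncomputable def coordSpaceEquiv (s : Finset (Fin n)) : coordSpace v s ≃ₗ[ℝ] (↥s → ℝ) where
  toFun x := fun i => coord v x.1 i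
  map_add' a b := by funext i; exact coord_add v _ _ _
  map_smul' c a := by funext i; simpa using coord_smul v c _ _
  invFun f := ⟨∑ j, (fun j => if h : j ∈ s then f ⟨j, h⟩ else 0) j • bv v j, by
      intro i hi; rw [coord_sum_smul]; simp [hi]⟩
  left_inv x := by
    apply Subtype.ext
    show (∑ j, (if h : j ∈ s then coord v x.1 j else 0) • bv v j) = x.1
    have he : ∀ j, (if h : j ∈ s then coord v x.1 j else 0) = coord v x.1 j := by
      intro j
      by_cases h : j ∈ s
      · simp [h]
      · simp [h, x.2 j h]
    simp_rw [he]
    exact sum_coord_smul v x.1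
  right_inv f := by
    funext i
    show coord v (∑ j, (if h : j ∈ s then f ⟨j, h⟩ else 0) • bv v j) i = f i
    rw [coord_sum_smul]
    simp [i.2]

lemma finrank_coordSpace (s : Finset (Fin n)) :
    Module.finrank ℝ (coordSpace v s) = s.card := by
  rw [LinearEquiv.finrank_eq (coordSpaceEquiv v s),
    Module.finrank_fintype_fun_eq_card, Fintype.card_coe]

lemma form_le_of_mem (hv : ∀ i, M *ᵥ bv v i = μ i • bv v i) {s : Finset (Fin n)} {b : ℝ}
    {x : Fin n → ℝ} (hx : x ∈ coordSpace v s) (hb : ∀ i ∈ s, μ i ≤ b) :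
    x ⬝ᵥ (M *ᵥ x) ≤ b * (x ⬝ᵥ x) := by
  rw [form_expand v μ hv, dot_self_eq_sum_coord_sq v]
  rw [← Finset.sum_subset (Finset.subset_univ s) (fun i _ hi => by rw [hx i hi]; ring),
    ← Finset.sum_subset (Finset.subset_univ s) (fun i _ hi => by rw [hx i hi]; ring),
    Finset.mul_sum]
  exact Finset.sum_le_sum fun i hi => mul_le_mul_of_nonneg_right (hb i hi) (sq_nonneg _)

lemma form_ge_of_mem (hv : ∀ i, M *ᵥ bv v i = μ i • bv v i) {s : Finset (Fin n)} {b : ℝ}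
    {x : Fin n → ℝ} (hx : x ∈ coordSpace v s) (hb : ∀ i ∈ s, b ≤ μ i) :
    b * (x ⬝ᵥ x) ≤ x ⬝ᵥ (M *ᵥ x) := by
  rw [form_expand v μ hv, dot_self_eq_sum_coord_sq v]
  rw [← Finset.sum_subset (Finset.subset_univ s) (fun i _ hi => by rw [hx i hi]; ring),
    ← Finset.sum_subset (Finset.subset_univ s) (fun i _ hi => by rw [hx i hi]; ring),
    Finset.mul_sum]
  exact Finset.sum_le_sum fun i hi => mul_le_mul_of_nonneg_right (hb i hi) (sq_nonneg _)

lemma form_pos_of_mem (hv : ∀ i, M *ᵥ bv v i = μ i • bv v i) {s : Finset (Fin n)}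
    {x : Fin n → ℝ} (hx : x ∈ coordSpace v s) (hs : ∀ i ∈ s, 0 < μ i) (hx0 : x ≠ 0) :
    0 < x ⬝ᵥ (M *ᵥ x) := by
  have hb : (0:ℝ) * (x ⬝ᵥ x) ≤ x ⬝ᵥ (M *ᵥ x) :=
    form_ge_of_mem v μ hv hx (fun i hi => (hs i hi).le)
  rw [zero_mul] at hb
  rcases hb.lt_or_eq with h | h
  · exact h
  · exfalso
    apply hx0
    apply eq_zero_of_coord_eq_zero v
    intro i
    by_cases hi : i ∈ s
    · -- on s, from form = 0
      have hform : ∑ i, μ i * coord v x i ^ 2 = 0 := by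
        rw [← form_expand v μ hv, ← h]
      have hnn : ∀ j ∈ Finset.univ, 0 ≤ μ j * coord v x j ^ 2 := by
        intro j _
        by_cases hj : j ∈ s
        · exact mul_nonneg (hs j hj).le (sq_nonneg _)
        · rw [hx j hj]; simp
      have := (Finset.sum_eq_zero_iff_of_nonneg hnn).mp hform i (Finset.mem_univ i)
      have hμ := hs i hi
      have : coord v x i ^ 2 = 0 := by
        by_contra hc
        exact hc (by nlinarith)
      exact pow_eq_zero_iff two_ne_zero |>.mp this
    · exact hx i hi

lemma form_neg_of_mem (hv : ∀ i, M *ᵥ bv v i = μ i • bv v i) {s : Finset (Fin n)}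
    {x : Fin n → ℝ} (hx : x ∈ coordSpace v s) (hs : ∀ i ∈ s, μ i < 0) (hx0 : x ≠ 0) :
    x ⬝ᵥ (M *ᵥ x) < 0 := by
  have hb : x ⬝ᵥ (M *ᵥ x) ≤ 0 := by
    have := form_le_of_mem v μ hv hx (b := 0) (fun i hi => (hs i hi).le)
    simpa using this
  rcases hb.lt_or_eq with h | h
  · exact h
  · exfalso
    apply hx0
    apply eq_zero_of_coord_eq_zero v
    intro i
    by_cases hi : i ∈ s
    · have hform : ∑ i, μ i * coord v x i ^ 2 = 0 := by
        rw [← form_expand v μ hv, h]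
      have hnn : ∀ j ∈ Finset.univ, μ j * coord v x j ^ 2 ≤ 0 := by
        intro j _
        by_cases hj : j ∈ s
        · exact mul_nonpos_of_nonpos_of_nonneg (hs j hj).le (sq_nonneg _)
        · rw [hx j hj]; simp
      have := (Finset.sum_eq_zero_iff_of_nonpos hnn).mp hform i (Finset.mem_univ i)
      have hμ := hs i hi
      have hsq : coord v x i ^ 2 = 0 := by
        by_contra hc
        exact hc (by nlinarith)
      exact pow_eq_zero_iff two_ne_zero |>.mp hsq
    · exact hx i hi


lemma finrank_le_of_posdef (hv : ∀ i, M *ᵥ bv v i = μ i • bv v i)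
    (W : Submodule ℝ (Fin n → ℝ)) (hW : ∀ x ∈ W, x ≠ 0 → 0 < x ⬝ᵥ (M *ᵥ x)) :
    Module.finrank ℝ W ≤ (Finset.univ.filter fun i => 0 < μ i).card := by
  classical
  set s : Finset (Fin n) := Finset.univ.filter (fun i => ¬ 0 < μ i) with hs
  have hdisj : Disjoint W (coordSpace v s) := by
    rw [Submodule.disjoint_def]
    intro x hxW hxV
    by_contra hx0
    have h1 := hW x hxW hx0
    have h2 := form_le_of_mem v μ hv hxV (b := 0)
      (fun i hi => not_lt.mp (Finset.mem_filter.mp hi).2)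
    simp only [zero_mul] at h2
    linarith
  have hle := Submodule.finrank_add_finrank_le_of_disjoint hdisj
  rw [finrank_coordSpace] at hle
  have hcard := Finset.card_filter_add_card_filter_not
    (s := Finset.univ) (p := fun i => 0 < μ i)
  have hfr : Module.finrank ℝ (Fin n → ℝ) = n := by
    rw [Module.finrank_fintype_fun_eq_card, Fintype.card_fin]
  rw [hfr] at hle
  rw [hs] at hle
  simp only [Finset.card_univ, Fintype.card_fin] at hcard
  omega

lemma finrank_le_of_negdef (hv : ∀ i, M *ᵥ bv v i = μ i • bv v i)
    (W : Submodule ℝ (Fin n → ℝ)) (hW : ∀ x ∈ W, x ≠ 0 → x ⬝ᵥ (M *ᵥ x) < 0) :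
    Module.finrank ℝ W ≤ (Finset.univ.filter fun i => μ i < 0).card := by
  classical
  set s : Finset (Fin n) := Finset.univ.filter (fun i => ¬ μ i < 0) with hs
  have hdisj : Disjoint W (coordSpace v s) := by
    rw [Submodule.disjoint_def]
    intro x hxW hxV
    by_contra hx0
    have h1 := hW x hxW hx0
    have h2 := form_ge_of_mem v μ hv hxV (b := 0)
      (fun i hi => not_lt.mp (Finset.mem_filter.mp hi).2)
    simp only [zero_mul] at h2
    linarith
  have hle := Submodule.finrank_add_finrank_le_of_disjoint hdisj
  rw [finrank_coordSpace] at hle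
  have hcard := Finset.card_filter_add_card_filter_not
    (s := Finset.univ) (p := fun i => μ i < 0)
  have hfr : Module.finrank ℝ (Fin n → ℝ) = n := by
    rw [Module.finrank_fintype_fun_eq_card, Fintype.card_fin]
  rw [hfr] at hle
  rw [hs] at hle
  simp only [Finset.card_univ, Fintype.card_fin] at hcard
  omega

lemma finrank_le_of_ker (hv : ∀ i, M *ᵥ bv v i = μ i • bv v i)
    (W : Submodule ℝ (Fin n → ℝ)) (hW : ∀ x ∈ W, M *ᵥ x = 0) :
    Module.finrank ℝ W ≤ (Finset.univ.filter fun i => μ i = 0).card := by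
  classical
  set s : Finset (Fin n) := Finset.univ.filter (fun i => ¬ μ i = 0) with hs
  have hdisj : Disjoint W (coordSpace v s) := by
    rw [Submodule.disjoint_def]
    intro x hxW hxV
    apply eq_zero_of_coord_eq_zero v
    intro i
    by_cases hi : i ∈ s
    · have : coord v (M *ᵥ x) i = μ i * coord v x i := coord_mulVec v μ hv x i
      rw [hW x hxW] at this
      have hz : (0:ℝ) = μ i * coord v x i := by
        rw [← this, coord_zero]
      have hμ : μ i ≠ 0 := (Finset.mem_filter.mp hi).2
      field_simp at hz
      exact (mul_eq_zero.mp hz.symm).resolve_left hμ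
    · exact hxV i hi
  have hle := Submodule.finrank_add_finrank_le_of_disjoint hdisj
  rw [finrank_coordSpace] at hle
  have hcard := Finset.card_filter_add_card_filter_not
    (s := Finset.univ) (p := fun i => μ i = 0)
  have hfr : Module.finrank ℝ (Fin n → ℝ) = n := by
    rw [Module.finrank_fintype_fun_eq_card, Fintype.card_fin]
  rw [hfr] at hle
  rw [hs] at hle
  simp only [Finset.card_univ, Fintype.card_fin] at hcard
  omega

lemma exists_posdef_subspace (hv : ∀ i, M *ᵥ bv v i = μ i • bv v i) :
    ∃ W : Submodule ℝ (Fin n → ℝ),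
      Module.finrank ℝ W = (Finset.univ.filter fun i => 0 < μ i).card ∧
      ∀ x ∈ W, x ≠ 0 → 0 < x ⬝ᵥ (M *ᵥ x) := by
  classical
  refine ⟨coordSpace v (Finset.univ.filter fun i => 0 < μ i), finrank_coordSpace v _, ?_⟩
  intro x hx hx0
  exact form_pos_of_mem v μ hv hx (fun i hi => (Finset.mem_filter.mp hi).2) hx0

lemma exists_negdef_subspace (hv : ∀ i, M *ᵥ bv v i = μ i • bv v i) :
    ∃ W : Submodule ℝ (Fin n → ℝ),
      Module.finrank ℝ W = (Finset.univ.filter fun i => μ i < 0).card ∧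
      ∀ x ∈ W, x ≠ 0 → x ⬝ᵥ (M *ᵥ x) < 0 := by
  classical
  refine ⟨coordSpace v (Finset.univ.filter fun i => μ i < 0), finrank_coordSpace v _, ?_⟩
  intro x hx hx0
  exact form_neg_of_mem v μ hv hx (fun i hi => (Finset.mem_filter.mp hi).2) hx0

lemma coordSpace_zero_le_ker (hv : ∀ i, M *ᵥ bv v i = μ i • bv v i) :
    ∀ x ∈ coordSpace v (Finset.univ.filter fun i => μ i = 0), M *ᵥ x = 0 := by
  classical
  intro x hx
  apply eq_zero_of_coord_eq_zero v
  intro i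
  rw [coord_mulVec v μ hv]
  by_cases hi : μ i = 0
  · rw [hi, zero_mul]
  · rw [hx i (by simp [hi]), mul_zero]

lemma card_filter_tricho (μ : Fin n → ℝ) :
    (Finset.univ.filter fun i => 0 < μ i).card + (Finset.univ.filter fun i => μ i < 0).card
      + (Finset.univ.filter fun i => μ i = 0).card = n := by
  classical
  have h1 := Finset.card_filter_add_card_filter_not
    (s := Finset.univ) (p := fun i : Fin n => 0 < μ i)
  have h2 : Finset.univ.filter (fun i : Fin n => ¬ 0 < μ i)
      = (Finset.univ.filter fun i => μ i < 0) ∪ (Finset.univ.filter fun i => μ i = 0) := by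
    rw [← Finset.filter_or]
    apply Finset.filter_congr
    intro i _
    constructor
    · intro h
      rcases lt_or_eq_of_le (not_lt.mp h) with h' | h'
      · exact Or.inl h'
      · exact Or.inr h'
    · intro h
      rcases h with h | h <;> simp [h, le_of_lt, not_lt] <;> linarith [h]
  have h3 : Disjoint (Finset.univ.filter fun i : Fin n => μ i < 0)
      (Finset.univ.filter fun i => μ i = 0) := by
    rw [Finset.disjoint_filter]
    intro i _ h h'
    rw [h'] at h
    exact lt_irrefl 0 h
  rw [h2, Finset.card_union_of_disjoint h3] at h1
  simp only [Finset.card_univ, Fintype.card_fin] at h1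
  omega

end Eigen

section Graph

/-- The subspace of vectors constant on connected components of `H`. -/
def constOn (H : SimpleGraph (Fin n)) : Submodule ℝ (Fin n → ℝ) where
  carrier := {x | ∀ i j, H.Reachable i j → x i = x j}
  add_mem' := fun {a b} ha hb i j hij => by rw [Pi.add_apply, Pi.add_apply, ha i j hij, hb i j hij]
  zero_mem' := fun i j _ => rfl
  smul_mem' := fun c x hx i j hij => by
    simp only [Pi.smul_apply, smul_eq_mul, hx i j hij]

lemma mem_constOn {H : SimpleGraph (Fin n)} {x : Fin n → ℝ} :
    x ∈ constOn H ↔ ∀ i j, H.Reachable i j → x i = x j := Iff.rfl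

lemma constOn_of_adj {H : SimpleGraph (Fin n)} {x : Fin n → ℝ}
    (h : ∀ i j, H.Adj i j → x i = x j) : x ∈ constOn H := by
  intro i j hij
  rcases hij with ⟨p⟩
  induction p with
  | nil => rfl
  | cons hadj _ ih => exact (h _ _ hadj).trans ih

/-- `constOn H` is linearly equivalent to functions on connected components. -/
noncomputable def constOnEquiv (H : SimpleGraph (Fin n)) :
    constOn H ≃ₗ[ℝ] (H.ConnectedComponent → ℝ) where
  toFun x := fun c => x.1 c.out
  map_add' a b := by funext c; rfl
  map_smul' c a := by funext d; rfl
  invFun y := ⟨fun i => y (H.connectedComponentMk i), by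
    intro i j hij
    simp only
    rw [SimpleGraph.ConnectedComponent.sound hij]⟩
  left_inv x := by
    apply Subtype.ext
    funext i
    show x.1 (H.connectedComponentMk i).out = x.1 i
    apply x.2
    have : H.connectedComponentMk (H.connectedComponentMk i).out = H.connectedComponentMk i :=
      (H.connectedComponentMk i).out_eq
    exact SimpleGraph.ConnectedComponent.exact this
  right_inv y := by
    funext c
    show y (H.connectedComponentMk c.out) = y c
    congr 1
    exact c.out_eq

lemma finrank_constOn (H : SimpleGraph (Fin n)) :
    Module.finrank ℝ (constOn H) = Nat.card H.ConnectedComponent := by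
  classical
  have : Finite H.ConnectedComponent := Quot.finite _
  have : Fintype H.ConnectedComponent := Fintype.ofFinite _
  rw [LinearEquiv.finrank_eq (constOnEquiv H), Module.finrank_fintype_fun_eq_card,
    Nat.card_eq_fintype_card]

lemma constOn_inf (H₁ H₂ : SimpleGraph (Fin n)) :
    constOn H₁ ⊓ constOn H₂ = constOn (H₁ ⊔ H₂) := by
  apply le_antisymm
  · intro x hx
    apply constOn_of_adj
    intro i j hij
    rcases hij with h | h
    · exact hx.1 i j h.reachable
    · exact hx.2 i j h.reachable
  · intro x hx
    constructor
    · intro i j hij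
      exact hx i j (SimpleGraph.Reachable.mono le_sup_left hij)
    · intro i j hij
      exact hx i j (SimpleGraph.Reachable.mono le_sup_right hij)

/-- Submodularity-type bound on components: `c₁ + c₂ ≤ n + c(H₁ ⊔ H₂)`. -/
lemma comps_add_comps_le (H₁ H₂ : SimpleGraph (Fin n)) :
    Nat.card H₁.ConnectedComponent + Nat.card H₂.ConnectedComponent
      ≤ n + Nat.card (H₁ ⊔ H₂).ConnectedComponent := by
  have h := Submodule.finrank_sup_add_finrank_inf_eq (constOn H₁) (constOn H₂)
  rw [constOn_inf, finrank_constOn, finrank_constOn, finrank_constOn] at h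
  have h2 : Module.finrank ℝ ↥(constOn H₁ ⊔ constOn H₂) ≤ n := by
    have := Submodule.finrank_le (constOn H₁ ⊔ constOn H₂)
    rwa [Module.finrank_fintype_fun_eq_card, Fintype.card_fin] at this
  omega

lemma comps_le (H : SimpleGraph (Fin n)) : Nat.card H.ConnectedComponent ≤ n := by
  have h := Nat.card_le_card_of_surjective
    (fun i => H.connectedComponentMk i) (Quot.mk_surjective)
  simpa using h

end Graph

section Lap

/-- standalone Laplacian of a weight matrix -/
def lapM (w : Matrix (Fin n) (Fin n) ℝ) : Matrix (Fin n) (Fin n) ℝ :=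
  w - Matrix.diagonal (fun i => ∑ j, w i j)

lemma lapM_mulVec (w : Matrix (Fin n) (Fin n) ℝ) (x : Fin n → ℝ) :
    lapM w *ᵥ x = fun i => ∑ j, w i j * (x j - x i) := by
  funext i
  have h1 : (lapM w *ᵥ x) i = (w *ᵥ x) i - (Matrix.diagonal (fun i => ∑ j, w i j) *ᵥ x) i := by
    rw [lapM, Matrix.sub_mulVec]; rfl
  rw [h1, Matrix.mulVec_diagonal]
  show (∑ j, w i j * x j) - (∑ j, w i j) * x i = _
  rw [Finset.sum_mul, ← Finset.sum_sub_distrib]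
  exact Finset.sum_congr rfl fun j _ => by ring

lemma lapM_mulVec_eq_zero {w : Matrix (Fin n) (Fin n) ℝ} {x : Fin n → ℝ}
    (h : ∀ i j, w i j ≠ 0 → x i = x j) : lapM w *ᵥ x = 0 := by
  rw [lapM_mulVec]
  funext i
  show (∑ j, w i j * (x j - x i)) = 0
  apply Finset.sum_eq_zero
  intro j _
  by_cases hw : w i j = 0
  · rw [hw, zero_mul]
  · rw [← h i j hw]; ring

lemma lapM_add (a b : Matrix (Fin n) (Fin n) ℝ) : lapM (a + b) = lapM a + lapM b := by
  simp only [lapM, Matrix.add_apply, Finset.sum_add_distrib]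
  rw [show Matrix.diagonal (fun i => (∑ j, a i j) + ∑ j, b i j)
    = Matrix.diagonal (fun i => ∑ j, a i j) + Matrix.diagonal (fun i => ∑ j, b i j) from
      (Matrix.diagonal_add _ _).symm]
  abel

lemma lapM_smul (c : ℝ) (a : Matrix (Fin n) (Fin n) ℝ) : lapM (c • a) = c • lapM a := by
  simp only [lapM, Matrix.smul_apply, smul_eq_mul, ← Finset.mul_sum]
  rw [show Matrix.diagonal (fun i => c * ∑ j, a i j)
    = c • Matrix.diagonal (fun i => ∑ j, a i j) from by
      ext i j
      by_cases h : i = j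
      · simp [h, Matrix.diagonal_apply_eq]
      · simp [Matrix.diagonal_apply_ne _ h]]
  rw [smul_sub]

lemma form_lapM {w : Matrix (Fin n) (Fin n) ℝ} (hw : ∀ i j, w i j = w j i) (x : Fin n → ℝ) :
    2 * (x ⬝ᵥ (lapM w *ᵥ x)) = - ∑ i, ∑ j, w i j * (x i - x j)^2 := by
  have hswap : ∑ i, ∑ j, w i j * x j ^ 2 = ∑ i, ∑ j, w i j * x i ^ 2 := by
    rw [Finset.sum_comm]
    exact Finset.sum_congr rfl fun i _ => Finset.sum_congr rfl fun j _ => by rw [hw]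
  have e1 : x ⬝ᵥ (lapM w *ᵥ x)
      = (∑ i, ∑ j, w i j * x i * x j) - ∑ i, ∑ j, w i j * x i ^ 2 := by
    rw [lapM_mulVec]
    show (∑ i, x i * ∑ j, w i j * (x j - x i)) = _
    rw [← Finset.sum_sub_distrib]
    refine Finset.sum_congr rfl fun i _ => ?_
    rw [Finset.mul_sum, ← Finset.sum_sub_distrib]
    exact Finset.sum_congr rfl fun j _ => by ring
  have e2 : ∑ i, ∑ j, w i j * (x i - x j)^2
      = (∑ i, ∑ j, w i j * x i ^ 2) - 2 * (∑ i, ∑ j, w i j * x i * x j)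
        + ∑ i, ∑ j, w i j * x j ^ 2 := by
    have : ∀ i j : Fin n, w i j * (x i - x j)^2
        = w i j * x i ^ 2 - 2 * (w i j * x i * x j) + w i j * x j ^ 2 := fun i j => by ring
    simp only [this, Finset.sum_add_distrib, Finset.sum_sub_distrib, ← Finset.mul_sum]
  rw [e1]
  rw [hswap] at e2
  linarith

lemma form_lapM_nonpos {w : Matrix (Fin n) (Fin n) ℝ} (hw : ∀ i j, w i j = w j i)
    (h0 : ∀ i j, 0 ≤ w i j) (x : Fin n → ℝ) : x ⬝ᵥ (lapM w *ᵥ x) ≤ 0 := by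
  have h := form_lapM hw x
  have hnn : 0 ≤ ∑ i, ∑ j, w i j * (x i - x j)^2 :=
    Finset.sum_nonneg fun i _ => Finset.sum_nonneg fun j _ =>
      mul_nonneg (h0 i j) (sq_nonneg _)
  linarith

lemma form_lapM_nonneg {w : Matrix (Fin n) (Fin n) ℝ} (hw : ∀ i j, w i j = w j i)
    (h0 : ∀ i j, w i j ≤ 0) (x : Fin n → ℝ) : 0 ≤ x ⬝ᵥ (lapM w *ᵥ x) := by
  have h := form_lapM hw x
  have hnn : ∑ i, ∑ j, w i j * (x i - x j)^2 ≤ 0 :=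
    Finset.sum_nonpos fun i _ => Finset.sum_nonpos fun j _ =>
      mul_nonpos_of_nonpos_of_nonneg (h0 i j) (sq_nonneg _)
  linarith

lemma adj_const_of_form_eq_zero {w : Matrix (Fin n) (Fin n) ℝ} (hw : ∀ i j, w i j = w j i)
    (h0 : ∀ i j, 0 ≤ w i j) {x : Fin n → ℝ} (hform : x ⬝ᵥ (lapM w *ᵥ x) = 0) :
    ∀ i j, w i j ≠ 0 → x i = x j := by
  have h := form_lapM hw x
  rw [hform, mul_zero] at h
  have hsum : ∑ i, ∑ j, w i j * (x i - x j)^2 = 0 := by linarith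
  intro i j hij
  have hterm := (Finset.sum_eq_zero_iff_of_nonneg
    (fun i (_ : i ∈ Finset.univ) => Finset.sum_nonneg fun j _ =>
      mul_nonneg (h0 i j) (sq_nonneg (x i - x j)))).mp hsum i (Finset.mem_univ i)
  have hterm2 := (Finset.sum_eq_zero_iff_of_nonneg
    (fun j (_ : j ∈ Finset.univ) => mul_nonneg (h0 i j) (sq_nonneg (x i - x j)))).mp
      hterm j (Finset.mem_univ j)
  have hpos : 0 < w i j := lt_of_le_of_ne (h0 i j) (Ne.symm hij)
  have : (x i - x j)^2 = 0 := by
    by_contra hc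
    exact hc (by nlinarith)
  have := pow_eq_zero_iff two_ne_zero |>.mp this
  linarith [this]

lemma adj_const_of_form_eq_zero' {w : Matrix (Fin n) (Fin n) ℝ} (hw : ∀ i j, w i j = w j i)
    (h0 : ∀ i j, w i j ≤ 0) {x : Fin n → ℝ} (hform : x ⬝ᵥ (lapM w *ᵥ x) = 0) :
    ∀ i j, w i j ≠ 0 → x i = x j := by
  have h := form_lapM hw x
  rw [hform, mul_zero] at h
  have hsum : ∑ i, ∑ j, w i j * (x i - x j)^2 = 0 := by linarith
  intro i j hij
  have hterm := (Finset.sum_eq_zero_iff_of_nonpos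
    (fun i (_ : i ∈ Finset.univ) => Finset.sum_nonpos fun j _ =>
      mul_nonpos_of_nonpos_of_nonneg (h0 i j) (sq_nonneg (x i - x j)))).mp
        hsum i (Finset.mem_univ i)
  have hterm2 := (Finset.sum_eq_zero_iff_of_nonpos
    (fun j (_ : j ∈ Finset.univ) => mul_nonpos_of_nonpos_of_nonneg (h0 i j)
      (sq_nonneg (x i - x j)))).mp hterm j (Finset.mem_univ j)
  have hneg : w i j < 0 := lt_of_le_of_ne (h0 i j) hij
  have : (x i - x j)^2 = 0 := by
    by_contra hc
    exact hc (by nlinarith)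
  have := pow_eq_zero_iff two_ne_zero |>.mp this
  linarith [this]

lemma abs_form_lapM_le {w : Matrix (Fin n) (Fin n) ℝ} (hw : ∀ i j, w i j = w j i)
    (h1 : ∀ i j, |w i j| ≤ 1) (x : Fin n → ℝ) :
    |x ⬝ᵥ (lapM w *ᵥ x)| ≤ 2 * n * (x ⬝ᵥ x) := by
  have h := form_lapM hw x
  have habs : |∑ i, ∑ j, w i j * (x i - x j)^2| ≤ ∑ i, ∑ j, (x i - x j)^2 := by
    refine (Finset.abs_sum_le_sum_abs _ _).trans ?_
    refine Finset.sum_le_sum fun i _ => ?_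
    refine (Finset.abs_sum_le_sum_abs _ _).trans ?_
    refine Finset.sum_le_sum fun j _ => ?_
    rw [abs_mul, abs_of_nonneg (sq_nonneg (x i - x j))]
    exact mul_le_of_le_one_left (sq_nonneg _) (h1 i j)
  have hbound : ∑ i, ∑ j, (x i - x j)^2 ≤ 4 * n * (x ⬝ᵥ x) := by
    have hterm : ∀ i j : Fin n, (x i - x j)^2 ≤ 2 * x i ^ 2 + 2 * x j ^ 2 := by
      intro i j; nlinarith [sq_nonneg (x i + x j)]
    calc ∑ i, ∑ j, (x i - x j)^2 ≤ ∑ i, ∑ j : Fin n, (2 * x i ^ 2 + 2 * x j ^ 2) :=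
          Finset.sum_le_sum fun i _ => Finset.sum_le_sum fun j _ => hterm i j
      _ = 4 * n * (x ⬝ᵥ x) := by
          simp only [Finset.sum_add_distrib, Finset.sum_const, Finset.card_univ,
            Fintype.card_fin, nsmul_eq_mul]
          have hxx : x ⬝ᵥ x = ∑ i, x i ^ 2 := by
            exact Finset.sum_congr rfl fun i _ => (sq (x i)).symm
          have hs : ∑ i : Fin n, (n : ℝ) * (2 * x i ^ 2) = 2 * n * ∑ i, x i ^ 2 := by
            rw [← Finset.mul_sum, ← Finset.mul_sum]; ring
          rw [hxx, Finset.mul_sum]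
          linarith [hs]
  have h2 : |x ⬝ᵥ (lapM w *ᵥ x)| = |∑ i, ∑ j, w i j * (x i - x j)^2| / 2 := by
    have hx2 : x ⬝ᵥ (lapM w *ᵥ x) = -(∑ i, ∑ j, w i j * (x i - x j)^2) / 2 := by
      linarith
    rw [hx2, abs_div, abs_neg, abs_two]
  have h3 : 0 ≤ ∑ i, ∑ j, (x i - x j)^2 :=
    Finset.sum_nonneg fun i _ => Finset.sum_nonneg fun j _ => sq_nonneg _
  linarith

end Lap


section WSGFacts

/-- eigenvector basis of the Laplacian -/
noncomputable def WSG.evec (Γ : WSG n) : OrthonormalBasis (Fin n) ℝ (EuclideanSpace ℝ (Fin n)) :=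
  Γ.lap_isHermitian.eigenvectorBasis

/-- eigenvalues of the Laplacian -/
noncomputable def WSG.eval (Γ : WSG n) : Fin n → ℝ :=
  Γ.lap_isHermitian.eigenvalues

lemma WSG.hv (Γ : WSG n) : ∀ i, Γ.lap *ᵥ bv Γ.evec i = Γ.eval i • bv Γ.evec i :=
  fun i => Γ.lap_isHermitian.mulVec_eigenvectorBasis i

lemma WSG.nPos_eq (Γ : WSG n) :
    Γ.nPos = (Finset.univ.filter fun i => 0 < Γ.eval i).card := rfl

lemma WSG.nNeg_eq (Γ : WSG n) :
    Γ.nNeg = (Finset.univ.filter fun i => Γ.eval i < 0).card := rfl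

lemma WSG.nZero_eq (Γ : WSG n) :
    Γ.nZero = (Finset.univ.filter fun i => Γ.eval i = 0).card := rfl

lemma WSG.count (Γ : WSG n) : Γ.nPos + Γ.nNeg + Γ.nZero = n := by
  rw [Γ.nPos_eq, Γ.nNeg_eq, Γ.nZero_eq]
  exact card_filter_tricho Γ.eval

lemma WSG.nPos_ge (Γ : WSG n) (W : Submodule ℝ (Fin n → ℝ))
    (hW : ∀ x ∈ W, x ≠ 0 → 0 < x ⬝ᵥ (Γ.lap *ᵥ x)) : Module.finrank ℝ W ≤ Γ.nPos := by
  rw [Γ.nPos_eq]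
  exact finrank_le_of_posdef Γ.evec Γ.eval Γ.hv W hW

lemma WSG.nNeg_ge (Γ : WSG n) (W : Submodule ℝ (Fin n → ℝ))
    (hW : ∀ x ∈ W, x ≠ 0 → x ⬝ᵥ (Γ.lap *ᵥ x) < 0) : Module.finrank ℝ W ≤ Γ.nNeg := by
  rw [Γ.nNeg_eq]
  exact finrank_le_of_negdef Γ.evec Γ.eval Γ.hv W hW

lemma WSG.nZero_ge (Γ : WSG n) (W : Submodule ℝ (Fin n → ℝ))
    (hW : ∀ x ∈ W, Γ.lap *ᵥ x = 0) : Module.finrank ℝ W ≤ Γ.nZero := by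
  rw [Γ.nZero_eq]
  exact finrank_le_of_ker Γ.evec Γ.eval Γ.hv W hW

lemma WSG.exists_posdef (Γ : WSG n) : ∃ W : Submodule ℝ (Fin n → ℝ),
    Module.finrank ℝ W = Γ.nPos ∧ ∀ x ∈ W, x ≠ 0 → 0 < x ⬝ᵥ (Γ.lap *ᵥ x) := by
  rw [Γ.nPos_eq]
  exact exists_posdef_subspace Γ.evec Γ.eval Γ.hv

lemma WSG.exists_negdef (Γ : WSG n) : ∃ W : Submodule ℝ (Fin n → ℝ),
    Module.finrank ℝ W = Γ.nNeg ∧ ∀ x ∈ W, x ≠ 0 → x ⬝ᵥ (Γ.lap *ᵥ x) < 0 := by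
  rw [Γ.nNeg_eq]
  exact exists_negdef_subspace Γ.evec Γ.eval Γ.hv

lemma WSG.exists_kerspace (Γ : WSG n) : ∃ W : Submodule ℝ (Fin n → ℝ),
    Module.finrank ℝ W = Γ.nZero ∧ ∀ x ∈ W, Γ.lap *ᵥ x = 0 := by
  rw [Γ.nZero_eq]
  exact ⟨coordSpace Γ.evec (Finset.univ.filter fun i => Γ.eval i = 0),
    finrank_coordSpace Γ.evec _, coordSpace_zero_le_ker Γ.evec Γ.eval Γ.hv⟩

lemma WSG.w_symm (Γ : WSG n) : ∀ i j, Γ.w i j = Γ.w j i := by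
  intro i j
  have := congrFun (congrFun Γ.symm j) i
  exact this

lemma WSG.lap_eq (Γ : WSG n) : Γ.lap = lapM Γ.w := rfl

end WSGFacts

section Bounds

lemma WSG.posGraph_adj_of (Γ : WSG n) {i j : Fin n} (h : 0 < Γ.w i j) : Γ.posGraph.Adj i j := by
  rw [WSG.posGraph, SimpleGraph.fromRel_adj]
  refine ⟨?_, Or.inl h⟩
  rintro rfl
  rw [Γ.loopless i] at h
  exact lt_irrefl 0 h

lemma WSG.negGraph_adj_of (Γ : WSG n) {i j : Fin n} (h : Γ.w i j < 0) : Γ.negGraph.Adj i j := by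
  rw [WSG.negGraph, SimpleGraph.fromRel_adj]
  refine ⟨?_, Or.inl h⟩
  rintro rfl
  rw [Γ.loopless i] at h
  exact lt_irrefl 0 h

lemma WSG.graph_adj_of (Γ : WSG n) {i j : Fin n} (h : Γ.w i j ≠ 0) : Γ.graph.Adj i j := by
  rw [WSG.graph, SimpleGraph.fromRel_adj]
  refine ⟨?_, Or.inl h⟩
  rintro rfl
  exact h (Γ.loopless i)

lemma WSG.graph_eq_sup (Γ : WSG n) : Γ.graph = Γ.posGraph ⊔ Γ.negGraph := by
  ext i j
  simp only [WSG.graph, WSG.posGraph, WSG.negGraph, SimpleGraph.fromRel_adj,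
    SimpleGraph.sup_adj]
  rw [Γ.w_symm j i]
  simp only [or_self]
  constructor
  · rintro ⟨hne, hz⟩
    rcases Ne.lt_or_gt hz with h | h
    · exact Or.inr ⟨hne, h⟩
    · exact Or.inl ⟨hne, h⟩
  · rintro (⟨hne, h⟩ | ⟨hne, h⟩)
    · exact ⟨hne, ne_of_gt h⟩
    · exact ⟨hne, ne_of_lt h⟩

lemma Consistent.graph_eq {G : SignedGraph n} {Γ : WSG n} (hc : Consistent G Γ) :
    Γ.graph = G.graph := by
  rw [WSG.graph_eq_sup, hc.1, hc.2]
  rfl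

lemma form_decomp (Γ : WSG n) (x : Fin n → ℝ) :
    x ⬝ᵥ (Γ.lap *ᵥ x) = x ⬝ᵥ (lapM (fun i j => max (Γ.w i j) 0) *ᵥ x)
      + x ⬝ᵥ (lapM (fun i j => min (Γ.w i j) 0) *ᵥ x) := by
  have hw : Γ.w = (fun i j => max (Γ.w i j) 0) + (fun i j => min (Γ.w i j) 0) := by
    funext i j
    show Γ.w i j = max (Γ.w i j) 0 + min (Γ.w i j) 0
    rw [max_add_min, add_zero]
  rw [Γ.lap_eq]
  conv_lhs => rw [hw]
  erw [lapM_add, Matrix.add_mulVec, dotProduct_add]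

lemma bound_nPos {G : SignedGraph n} {Γ : WSG n} (hc : Consistent G Γ) :
    Γ.nPos + comps G.neg ≤ n := by
  obtain ⟨W, hWdim, hWpos⟩ := Γ.exists_posdef
  have hV : ∀ x ∈ constOn G.neg, x ⬝ᵥ (Γ.lap *ᵥ x) ≤ 0 := by
    intro x hx
    rw [form_decomp]
    have h1 : x ⬝ᵥ (lapM (fun i j => max (Γ.w i j) 0) *ᵥ x) ≤ 0 :=
      form_lapM_nonpos (fun i j => by simp [Γ.w_symm i j]) (fun i j => le_max_right _ _) x
    have h2 : lapM (fun i j => min (Γ.w i j) 0) *ᵥ x = 0 := by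
      apply lapM_mulVec_eq_zero
      intro i j hne
      have hlt : Γ.w i j < 0 := by
        rcases lt_or_ge (Γ.w i j) 0 with h | h
        · exact h
        · exact absurd (min_eq_right h) hne
      exact hx i j (hc.2 ▸ (Γ.negGraph_adj_of hlt)).reachable
    rw [h2]
    simpa using h1
  have hdisj : Disjoint W (constOn G.neg) := by
    rw [Submodule.disjoint_def]
    intro x hxW hxV
    by_contra hx0
    linarith [hWpos x hxW hx0, hV x hxV]
  have hle := Submodule.finrank_add_finrank_le_of_disjoint hdisj
  rw [hWdim, finrank_constOn, Module.finrank_fintype_fun_eq_card, Fintype.card_fin] at hle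
  simpa [comps] using hle

lemma bound_nNeg {G : SignedGraph n} {Γ : WSG n} (hc : Consistent G Γ) :
    Γ.nNeg + comps G.pos ≤ n := by
  obtain ⟨W, hWdim, hWneg⟩ := Γ.exists_negdef
  have hV : ∀ x ∈ constOn G.pos, 0 ≤ x ⬝ᵥ (Γ.lap *ᵥ x) := by
    intro x hx
    rw [form_decomp]
    have h1 : 0 ≤ x ⬝ᵥ (lapM (fun i j => min (Γ.w i j) 0) *ᵥ x) :=
      form_lapM_nonneg (fun i j => by simp [Γ.w_symm i j]) (fun i j => min_le_right _ _) x
    have h2 : lapM (fun i j => max (Γ.w i j) 0) *ᵥ x = 0 := by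
      apply lapM_mulVec_eq_zero
      intro i j hne
      have hlt : 0 < Γ.w i j := by
        rcases le_or_gt (Γ.w i j) 0 with h | h
        · exact absurd (max_eq_right h) hne
        · exact h
      exact hx i j (hc.1 ▸ (Γ.posGraph_adj_of hlt)).reachable
    rw [h2]
    simpa using h1
  have hdisj : Disjoint W (constOn G.pos) := by
    rw [Submodule.disjoint_def]
    intro x hxW hxV
    by_contra hx0
    linarith [hWneg x hxW hx0, hV x hxV]
  have hle := Submodule.finrank_add_finrank_le_of_disjoint hdisj
  rw [hWdim, finrank_constOn, Module.finrank_fintype_fun_eq_card, Fintype.card_fin] at hle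
  simpa [comps] using hle

lemma bound_nZero {G : SignedGraph n} {Γ : WSG n} (hc : Consistent G Γ) :
    comps G.graph ≤ Γ.nZero := by
  have h := Γ.nZero_ge (constOn G.graph) ?_
  · rw [finrank_constOn] at h
    simpa [comps] using h
  · intro x hx
    rw [Γ.lap_eq]
    apply lapM_mulVec_eq_zero
    intro i j hne
    exact hx i j (hc.graph_eq ▸ (Γ.graph_adj_of hne)).reachable

lemma consistent_pos_w {G : SignedGraph n} {Γ : WSG n} (hc : Consistent G Γ) {i j : Fin n}
    (h : G.pos.Adj i j) : 0 < Γ.w i j := by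
  rw [← hc.1] at h
  rw [WSG.posGraph, SimpleGraph.fromRel_adj] at h
  rcases h.2 with h' | h'
  · exact h'
  · rw [Γ.w_symm i j]; exact h'

lemma consistent_neg_w {G : SignedGraph n} {Γ : WSG n} (hc : Consistent G Γ) {i j : Fin n}
    (h : G.neg.Adj i j) : Γ.w i j < 0 := by
  rw [← hc.2] at h
  rw [WSG.negGraph, SimpleGraph.fromRel_adj] at h
  rcases h.2 with h' | h'
  · exact h'
  · rw [Γ.w_symm i j]; exact h'

lemma constOn_graph_le_neg (G : SignedGraph n) : constOn G.graph ≤ constOn G.neg := by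
  intro x hx i j hij
  exact hx i j (hij.mono (le_sup_right : G.neg ≤ G.pos ⊔ G.neg))

lemma constOn_graph_le_pos (G : SignedGraph n) : constOn G.graph ≤ constOn G.pos := by
  intro x hx i j hij
  exact hx i j (hij.mono (le_sup_left : G.pos ≤ G.pos ⊔ G.neg))

lemma bound_nNeg' {G : SignedGraph n} {Γ : WSG n} (hc : Consistent G Γ) :
    comps G.neg ≤ Γ.nNeg + comps G.graph := by
  classical
  set U := constOn G.neg with hU
  set I := constOn G.graph with hI
  have hIU : I ≤ U := constOn_graph_le_neg G
  set K' : Submodule ℝ ↥U := Submodule.comap U.subtype I with hK'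
  obtain ⟨W', hW'⟩ := K'.exists_isCompl
  set W : Submodule ℝ (Fin n → ℝ) := W'.map U.subtype with hW
  have hWU : W ≤ U := by
    rintro x ⟨y, hy, rfl⟩
    exact y.2
  have hneg : ∀ x ∈ W, x ≠ 0 → x ⬝ᵥ (Γ.lap *ᵥ x) < 0 := by
    intro x hxW hx0
    have hxU : x ∈ U := hWU hxW
    have h2 : lapM (fun i j => min (Γ.w i j) 0) *ᵥ x = 0 := by
      apply lapM_mulVec_eq_zero
      intro i j hne
      have hlt : Γ.w i j < 0 := by
        rcases lt_or_ge (Γ.w i j) 0 with h | h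
        · exact h
        · exact absurd (min_eq_right h) hne
      exact hxU i j (hc.2 ▸ (Γ.negGraph_adj_of hlt)).reachable
    have hform : x ⬝ᵥ (Γ.lap *ᵥ x) = x ⬝ᵥ (lapM (fun i j => max (Γ.w i j) 0) *ᵥ x) := by
      rw [form_decomp, h2]
      simp
    have h1 : x ⬝ᵥ (lapM (fun i j => max (Γ.w i j) 0) *ᵥ x) ≤ 0 :=
      form_lapM_nonpos (fun i j => by simp [Γ.w_symm i j]) (fun i j => le_max_right _ _) x
    rw [hform]
    rcases h1.lt_or_eq with h | h
    · exact h
    · exfalso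
      have hadj := adj_const_of_form_eq_zero
        (fun i j => by simp [Γ.w_symm i j]) (fun i j => le_max_right _ _) h
      have hxP : x ∈ constOn G.pos := by
        apply constOn_of_adj
        intro i j hadj'
        have hwp : 0 < Γ.w i j := consistent_pos_w hc hadj'
        exact hadj i j (by rw [max_eq_left hwp.le]; exact ne_of_gt hwp)
      have hxI : x ∈ I := by
        rw [hI, show G.graph = G.pos ⊔ G.neg from rfl, ← constOn_inf]
        exact ⟨hxP, hxU⟩
      obtain ⟨y, hyW', hyx⟩ := hxW
      have hyK : y ∈ K' := by
        rw [hK', Submodule.mem_comap]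
        show (U.subtype y : Fin n → ℝ) ∈ I
        rw [show (U.subtype y : Fin n → ℝ) = x from hyx]
        exact hxI
      have : y = 0 := Submodule.disjoint_def.mp hW'.disjoint y hyK hyW'
      apply hx0
      rw [← hyx, this]
      rfl
  have hfin := Submodule.finrank_add_eq_of_isCompl hW'
  have hfK : Module.finrank ℝ K' = Module.finrank ℝ I :=
    LinearEquiv.finrank_eq (Submodule.comapSubtypeEquivOfLe hIU)
  have hfW : Module.finrank ℝ W = Module.finrank ℝ W' :=
    Submodule.finrank_map_subtype_eq U W'
  have hge := Γ.nNeg_ge W hneg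
  have hcU : Module.finrank ℝ U = comps G.neg := by
    rw [hU, finrank_constOn]; rfl
  have hcI : Module.finrank ℝ I = comps G.graph := by
    rw [hI, finrank_constOn]; rfl
  omega

lemma bound_nPos' {G : SignedGraph n} {Γ : WSG n} (hc : Consistent G Γ) :
    comps G.pos ≤ Γ.nPos + comps G.graph := by
  classical
  set U := constOn G.pos with hU
  set I := constOn G.graph with hI
  have hIU : I ≤ U := constOn_graph_le_pos G
  set K' : Submodule ℝ ↥U := Submodule.comap U.subtype I with hK'
  obtain ⟨W', hW'⟩ := K'.exists_isCompl
  set W : Submodule ℝ (Fin n → ℝ) := W'.map U.subtype with hW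
  have hWU : W ≤ U := by
    rintro x ⟨y, hy, rfl⟩
    exact y.2
  have hpos : ∀ x ∈ W, x ≠ 0 → 0 < x ⬝ᵥ (Γ.lap *ᵥ x) := by
    intro x hxW hx0
    have hxU : x ∈ U := hWU hxW
    have h2 : lapM (fun i j => max (Γ.w i j) 0) *ᵥ x = 0 := by
      apply lapM_mulVec_eq_zero
      intro i j hne
      have hlt : 0 < Γ.w i j := by
        rcases le_or_gt (Γ.w i j) 0 with h | h
        · exact absurd (max_eq_right h) hne
        · exact h
      exact hxU i j (hc.1 ▸ (Γ.posGraph_adj_of hlt)).reachable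
    have hform : x ⬝ᵥ (Γ.lap *ᵥ x) = x ⬝ᵥ (lapM (fun i j => min (Γ.w i j) 0) *ᵥ x) := by
      rw [form_decomp, h2]
      simp
    have h1 : 0 ≤ x ⬝ᵥ (lapM (fun i j => min (Γ.w i j) 0) *ᵥ x) :=
      form_lapM_nonneg (fun i j => by simp [Γ.w_symm i j]) (fun i j => min_le_right _ _) x
    rw [hform]
    rcases h1.lt_or_eq with h | h
    · exact h
    · exfalso
      have hadj := adj_const_of_form_eq_zero'
        (fun i j => by simp [Γ.w_symm i j]) (fun i j => min_le_right _ _) h.symm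
      have hxN : x ∈ constOn G.neg := by
        apply constOn_of_adj
        intro i j hadj'
        have hwm : Γ.w i j < 0 := consistent_neg_w hc hadj'
        exact hadj i j (by rw [min_eq_left hwm.le]; exact ne_of_lt hwm)
      have hxI : x ∈ I := by
        rw [hI, show G.graph = G.pos ⊔ G.neg from rfl, ← constOn_inf]
        exact ⟨hxU, hxN⟩
      obtain ⟨y, hyW', hyx⟩ := hxW
      have hyK : y ∈ K' := by
        rw [hK', Submodule.mem_comap]
        show (U.subtype y : Fin n → ℝ) ∈ I
        rw [show (U.subtype y : Fin n → ℝ) = x from hyx]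
        exact hxI
      have : y = 0 := Submodule.disjoint_def.mp hW'.disjoint y hyK hyW'
      apply hx0
      rw [← hyx, this]
      rfl
  have hfin := Submodule.finrank_add_eq_of_isCompl hW'
  have hfK : Module.finrank ℝ K' = Module.finrank ℝ I :=
    LinearEquiv.finrank_eq (Submodule.comapSubtypeEquivOfLe hIU)
  have hfW : Module.finrank ℝ W = Module.finrank ℝ W' :=
    Submodule.finrank_map_subtype_eq U W'
  have hge := Γ.nPos_ge W hpos
  have hcU : Module.finrank ℝ U = comps G.pos := by
    rw [hU, finrank_constOn]; rfl
  have hcI : Module.finrank ℝ I = comps G.graph := by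
    rw [hI, finrank_constOn]; rfl
  omega

end Bounds

section Construction

variable (G : SignedGraph n)

/-- weighting with positive edges of weight `a` and negative edges of weight `-b`. -/
noncomputable def pert (a b : ℝ) : WSG n where
  w := fun i j => a * (if G.pos.Adj i j then (1:ℝ) else 0)
    + b * (if G.neg.Adj i j then (-1:ℝ) else 0)
  symm := by
    ext i j
    show a * (if G.pos.Adj j i then (1:ℝ) else 0)
        + b * (if G.neg.Adj j i then (-1:ℝ) else 0) = _
    rw [if_congr (G.pos.adj_comm j i) rfl rfl, if_congr (G.neg.adj_comm j i) rfl rfl]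
  loopless := by
    intro i
    simp [SimpleGraph.irrefl]

lemma pert_w (a b : ℝ) (i j : Fin n) :
    (pert G a b).w i j = a * (if G.pos.Adj i j then (1:ℝ) else 0)
      + b * (if G.neg.Adj i j then (-1:ℝ) else 0) := rfl

lemma pert_w_pos {a b : ℝ} {i j : Fin n} (h : G.pos.Adj i j) : (pert G a b).w i j = a := by
  have hn : ¬ G.neg.Adj i j := fun h' => G.disj i j ⟨h, h'⟩
  simp [pert_w, h, hn]

lemma pert_w_neg {a b : ℝ} {i j : Fin n} (h : G.neg.Adj i j) : (pert G a b).w i j = -b := by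
  have hp : ¬ G.pos.Adj i j := fun h' => G.disj i j ⟨h', h⟩
  simp [pert_w, h, hp]

lemma pert_w_none {a b : ℝ} {i j : Fin n} (hp : ¬ G.pos.Adj i j) (hn : ¬ G.neg.Adj i j) :
    (pert G a b).w i j = 0 := by
  simp [pert_w, hp, hn]

lemma pert_consistent {a b : ℝ} (ha : 0 < a) (hb : 0 < b) : Consistent G (pert G a b) := by
  have hpos : ∀ i j, 0 < (pert G a b).w i j ↔ G.pos.Adj i j := by
    intro i j
    by_cases hp : G.pos.Adj i j
    · simp [pert_w_pos G hp, ha, hp]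
    · by_cases hn : G.neg.Adj i j
      · simp [pert_w_neg G hn, hp]
        linarith
      · simp [pert_w_none G hp hn, hp]
  have hneg : ∀ i j, (pert G a b).w i j < 0 ↔ G.neg.Adj i j := by
    intro i j
    by_cases hn : G.neg.Adj i j
    · simp [pert_w_neg G hn, hb, hn]
    · by_cases hp : G.pos.Adj i j
      · simp [pert_w_pos G hp, hn]
        linarith
      · simp [pert_w_none G hp hn, hn]
  constructor
  · ext i j
    rw [WSG.posGraph, SimpleGraph.fromRel_adj]
    constructor
    · rintro ⟨hne, h | h⟩
      · exact (hpos i j).mp h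
      · exact ((hpos j i).mp h).symm
    · intro h
      exact ⟨h.ne, Or.inl ((hpos i j).mpr h)⟩
  · ext i j
    rw [WSG.negGraph, SimpleGraph.fromRel_adj]
    constructor
    · rintro ⟨hne, h | h⟩
      · exact (hneg i j).mp h
      · exact ((hneg j i).mp h).symm
    · intro h
      exact ⟨h.ne, Or.inl ((hneg i j).mpr h)⟩

lemma pert_form (a b : ℝ) (x : Fin n → ℝ) :
    x ⬝ᵥ ((pert G a b).lap *ᵥ x)
      = a * (x ⬝ᵥ ((pert G 1 0).lap *ᵥ x)) + b * (x ⬝ᵥ ((pert G 0 1).lap *ᵥ x)) := by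
  have hw : (pert G a b).w = a • (pert G 1 0).w + b • (pert G 0 1).w := by
    funext i j
    show (pert G a b).w i j = a * (pert G 1 0).w i j + b * (pert G 0 1).w i j
    simp only [pert_w]
    ring
  rw [WSG.lap_eq, hw, lapM_add, lapM_smul, lapM_smul, Matrix.add_mulVec,
    Matrix.smul_mulVec, Matrix.smul_mulVec, dotProduct_add,
    dot_smul', dot_smul', ← WSG.lap_eq, ← WSG.lap_eq]

/-- facts about the all-ones positive weighting -/
lemma posWSG_w_symm : ∀ i j : Fin n, (pert G 1 0).w i j = (pert G 1 0).w j i :=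
  (pert G 1 0).w_symm

lemma posWSG_w_nonneg : ∀ i j : Fin n, 0 ≤ (pert G 1 0).w i j := by
  intro i j
  by_cases hp : G.pos.Adj i j
  · rw [pert_w_pos G hp]; norm_num
  · by_cases hn : G.neg.Adj i j
    · rw [pert_w_neg G hn]; norm_num
    · rw [pert_w_none G hp hn]

lemma posWSG_w_abs : ∀ i j : Fin n, |(pert G 1 0).w i j| ≤ 1 := by
  intro i j
  by_cases hp : G.pos.Adj i j
  · rw [pert_w_pos G hp]; norm_num
  · by_cases hn : G.neg.Adj i j
    · rw [pert_w_neg G hn]; norm_num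
    · rw [pert_w_none G hp hn]; norm_num

lemma negWSG_w_nonpos : ∀ i j : Fin n, (pert G 0 1).w i j ≤ 0 := by
  intro i j
  by_cases hn : G.neg.Adj i j
  · rw [pert_w_neg G hn]; norm_num
  · by_cases hp : G.pos.Adj i j
    · rw [pert_w_pos G hp]
    · rw [pert_w_none G hp hn]

lemma negWSG_w_abs : ∀ i j : Fin n, |(pert G 0 1).w i j| ≤ 1 := by
  intro i j
  by_cases hn : G.neg.Adj i j
  · rw [pert_w_neg G hn]; norm_num
  · by_cases hp : G.pos.Adj i j
    · rw [pert_w_pos G hp]; norm_num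
    · rw [pert_w_none G hp hn]; norm_num

lemma posWSG_w_ne_iff {i j : Fin n} : (pert G 1 0).w i j ≠ 0 ↔ G.pos.Adj i j := by
  by_cases hp : G.pos.Adj i j
  · simp [pert_w_pos G hp, hp]
  · by_cases hn : G.neg.Adj i j
    · simp [pert_w_neg G hn, hp]
    · simp [pert_w_none G hp hn, hp]

lemma negWSG_w_ne_iff {i j : Fin n} : (pert G 0 1).w i j ≠ 0 ↔ G.neg.Adj i j := by
  by_cases hn : G.neg.Adj i j
  · simp [pert_w_neg G hn, hn]
  · by_cases hp : G.pos.Adj i j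
    · simp [pert_w_pos G hp, hn]
    · simp [pert_w_none G hp hn, hn]

lemma posWSG_nPos : (pert G 1 0).nPos = 0 := by
  obtain ⟨W, hdim, hpos⟩ := (pert G 1 0).exists_posdef
  have hW : W = ⊥ := by
    rw [Submodule.eq_bot_iff]
    intro x hx
    by_contra hx0
    have h1 := hpos x hx hx0
    have h2 : x ⬝ᵥ ((pert G 1 0).lap *ᵥ x) ≤ 0 := by
      rw [WSG.lap_eq]
      exact form_lapM_nonpos (posWSG_w_symm G) (posWSG_w_nonneg G) x
    linarith
  rw [hW, finrank_bot] at hdim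
  omega

lemma negWSG_nNeg : (pert G 0 1).nNeg = 0 := by
  obtain ⟨W, hdim, hneg⟩ := (pert G 0 1).exists_negdef
  have hW : W = ⊥ := by
    rw [Submodule.eq_bot_iff]
    intro x hx
    by_contra hx0
    have h1 := hneg x hx hx0
    have h2 : 0 ≤ x ⬝ᵥ ((pert G 0 1).lap *ᵥ x) := by
      rw [WSG.lap_eq]
      exact form_lapM_nonneg ((pert G 0 1).w_symm) (negWSG_w_nonpos G) x
    linarith
  rw [hW, finrank_bot] at hdim
  omega

lemma posWSG_nZero : (pert G 1 0).nZero = comps G.pos := by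
  apply le_antisymm
  · obtain ⟨W, hdim, hker⟩ := (pert G 1 0).exists_kerspace
    have hle : W ≤ constOn G.pos := by
      intro x hx
      have h0 : x ⬝ᵥ ((pert G 1 0).lap *ᵥ x) = 0 := by
        rw [hker x hx, dotProduct_zero]
      have hadj := adj_const_of_form_eq_zero (posWSG_w_symm G) (posWSG_w_nonneg G)
        (by rw [← WSG.lap_eq]; exact h0)
      exact constOn_of_adj fun i j h =>
        hadj i j ((posWSG_w_ne_iff G).mpr h)
    have := Submodule.finrank_mono hle
    rw [hdim, finrank_constOn] at this
    exact this
  · have h := (pert G 1 0).nZero_ge (constOn G.pos) ?_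
    · rw [finrank_constOn] at h
      exact h
    · intro x hx
      rw [WSG.lap_eq]
      apply lapM_mulVec_eq_zero
      intro i j hne
      exact hx i j ((posWSG_w_ne_iff G).mp hne).reachable

lemma negWSG_nZero : (pert G 0 1).nZero = comps G.neg := by
  apply le_antisymm
  · obtain ⟨W, hdim, hker⟩ := (pert G 0 1).exists_kerspace
    have hle : W ≤ constOn G.neg := by
      intro x hx
      have h0 : x ⬝ᵥ ((pert G 0 1).lap *ᵥ x) = 0 := by
        rw [hker x hx, dotProduct_zero]
      have hadj := adj_const_of_form_eq_zero' ((pert G 0 1).w_symm) (negWSG_w_nonpos G)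
        (by rw [← WSG.lap_eq]; exact h0)
      exact constOn_of_adj fun i j h =>
        hadj i j ((negWSG_w_ne_iff G).mpr h)
    have := Submodule.finrank_mono hle
    rw [hdim, finrank_constOn] at this
    exact this
  · have h := (pert G 0 1).nZero_ge (constOn G.neg) ?_
    · rw [finrank_constOn] at h
      exact h
    · intro x hx
      rw [WSG.lap_eq]
      apply lapM_mulVec_eq_zero
      intro i j hne
      exact hx i j ((negWSG_w_ne_iff G).mp hne).reachable

lemma exists_neg_rich : ∃ Γ : WSG n, Consistent G Γ ∧ n ≤ Γ.nNeg + comps G.pos := by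
  by_cases hcp : n ≤ comps G.pos
  · exact ⟨pert G 1 1, pert_consistent G one_pos one_pos,
      le_trans hcp (Nat.le_add_left _ _)⟩
  · have hsum : (pert G 1 0).nNeg + comps G.pos = n := by
      have h := (pert G 1 0).count
      rw [posWSG_nPos, posWSG_nZero] at h
      omega
    set Γ0 := pert G 1 0 with hΓ0
    set s := Finset.univ.filter (fun i => Γ0.eval i < 0) with hs
    have hcard : s.card = Γ0.nNeg := (Γ0.nNeg_eq).symm
    have hne : s.Nonempty := by
      rw [← Finset.card_pos, hcard]
      omega
    set b := s.sup' hne Γ0.eval with hbdef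
    have hb : b < 0 := by
      obtain ⟨i, hi, hieq⟩ := Finset.exists_mem_eq_sup' hne Γ0.eval
      rw [hs] at hi
      rw [hbdef, hieq]
      exact (Finset.mem_filter.mp hi).2
    set ε := -b / (2*n+1) with hεdef
    have hden : (0:ℝ) < 2*n+1 := by positivity
    have hε : 0 < ε := div_pos (by linarith) hden
    have hεb : ε * (2*n+1) = -b := by
      rw [hεdef]
      field_simp
    refine ⟨pert G 1 ε, pert_consistent G one_pos hε, ?_⟩
    have hkey : s.card ≤ (pert G 1 ε).nNeg := by
      have hV := (pert G 1 ε).nNeg_ge (coordSpace Γ0.evec s) ?_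
      · rw [finrank_coordSpace] at hV
        exact hV
      · intro x hx hx0
        have h1 : x ⬝ᵥ (Γ0.lap *ᵥ x) ≤ b * (x ⬝ᵥ x) :=
          form_le_of_mem Γ0.evec Γ0.eval Γ0.hv hx
            (fun i hi => Finset.le_sup' Γ0.eval hi)
        have h2 : x ⬝ᵥ ((pert G 0 1).lap *ᵥ x) ≤ 2*n*(x ⬝ᵥ x) := by
          have habs := abs_form_lapM_le ((pert G 0 1).w_symm) (negWSG_w_abs G) x
          rw [← WSG.lap_eq] at habs
          exact le_trans (le_abs_self _) habs
        have hxx : 0 < x ⬝ᵥ x := dot_self_pos x hx0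
        have h3 : ε * (x ⬝ᵥ ((pert G 0 1).lap *ᵥ x)) ≤ ε * (2*n*(x ⬝ᵥ x)) :=
          mul_le_mul_of_nonneg_left h2 hε.le
        rw [pert_form G 1 ε x]
        have hb2n : b + ε * (2*n) = -ε := by linarith [hεb]
        nlinarith [h1, h3, hxx, hε]
    omega

lemma exists_pos_rich : ∃ Γ : WSG n, Consistent G Γ ∧ n ≤ Γ.nPos + comps G.neg := by
  by_cases hcn : n ≤ comps G.neg
  · exact ⟨pert G 1 1, pert_consistent G one_pos one_pos,
      le_trans hcn (Nat.le_add_left _ _)⟩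
  · have hsum : (pert G 0 1).nPos + comps G.neg = n := by
      have h := (pert G 0 1).count
      rw [negWSG_nNeg, negWSG_nZero] at h
      omega
    set Γ0 := pert G 0 1 with hΓ0
    set s := Finset.univ.filter (fun i => 0 < Γ0.eval i) with hs
    have hcard : s.card = Γ0.nPos := (Γ0.nPos_eq).symm
    have hne : s.Nonempty := by
      rw [← Finset.card_pos, hcard]
      omega
    set b := s.inf' hne Γ0.eval with hbdef
    have hb : 0 < b := by
      obtain ⟨i, hi, hieq⟩ := Finset.exists_mem_eq_inf' hne Γ0.eval
      rw [hs] at hi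
      rw [hbdef, hieq]
      exact (Finset.mem_filter.mp hi).2
    set ε := b / (2*n+1) with hεdef
    have hden : (0:ℝ) < 2*n+1 := by positivity
    have hε : 0 < ε := div_pos hb hden
    have hεb : ε * (2*n+1) = b := by
      rw [hεdef]
      field_simp
    refine ⟨pert G ε 1, pert_consistent G hε one_pos, ?_⟩
    have hkey : s.card ≤ (pert G ε 1).nPos := by
      have hV := (pert G ε 1).nPos_ge (coordSpace Γ0.evec s) ?_
      · rw [finrank_coordSpace] at hV
        exact hV
      · intro x hx hx0
        have h1 : b * (x ⬝ᵥ x) ≤ x ⬝ᵥ (Γ0.lap *ᵥ x) :=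
          form_ge_of_mem Γ0.evec Γ0.eval Γ0.hv hx
            (fun i hi => Finset.inf'_le Γ0.eval hi)
        have h2 : -(2*n*(x ⬝ᵥ x)) ≤ x ⬝ᵥ ((pert G 1 0).lap *ᵥ x) := by
          have habs := abs_form_lapM_le ((pert G 1 0).w_symm) (posWSG_w_abs G) x
          rw [← WSG.lap_eq] at habs
          exact (abs_le.mp habs).1
        have hxx : 0 < x ⬝ᵥ x := dot_self_pos x hx0
        have h3 : ε * (-(2*n*(x ⬝ᵥ x))) ≤ ε * (x ⬝ᵥ ((pert G 1 0).lap *ᵥ x)) :=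
          mul_le_mul_of_nonneg_left h2 hε.le
        rw [pert_form G ε 1 x]
        have hb2n : b - ε * (2*n) = ε := by linarith [hεb]
        nlinarith [h1, h3, hxx, hε]
    omega

end Construction

end Toolkit

/-- A signed graph has a unique Laplacian inertia iff its flexibility
`τ = n + c - c₊ - c₋` is zero, and then the unique inertia is
`(c₊ - c, c₋ - c, c)`. -/
theorem unique_inertia_iff_flexibility_zero {n : ℕ} (G : SignedGraph n) :
    ((∃ T, HasUniqueInertia G T) ↔
      n + comps G.graph = comps G.pos + comps G.neg) ∧
    (n + comps G.graph = comps G.pos + comps G.neg →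
      HasUniqueInertia G (comps G.pos - comps G.graph, comps G.neg - comps G.graph,
        comps G.graph)) := by
  have htau : comps G.pos + comps G.neg ≤ n + comps G.graph := by
    have h := comps_add_comps_le G.pos G.neg
    have hg : G.graph = G.pos ⊔ G.neg := rfl
    rw [hg]
    simpa [comps] using h
  have hpart2 : n + comps G.graph = comps G.pos + comps G.neg →
      HasUniqueInertia G (comps G.pos - comps G.graph, comps G.neg - comps G.graph,
        comps G.graph) := by
    intro h Γ hc
    have b1 := bound_nPos hc
    have b2 := bound_nNeg hc
    have b3 := bound_nZero hc
    have b4 := Γ.count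
    have b5 := bound_nPos' hc
    have b6 := bound_nNeg' hc
    have e1 : Γ.nPos = comps G.pos - comps G.graph := by omega
    have e2 : Γ.nNeg = comps G.neg - comps G.graph := by omega
    have e3 : Γ.nZero = comps G.graph := by omega
    rw [WSG.inertia, e1, e2, e3]
  refine ⟨⟨?_, fun h => ⟨_, hpart2 h⟩⟩, hpart2⟩
  rintro ⟨T, hT⟩
  rcases T with ⟨a, bb, c⟩
  obtain ⟨Γ1, hc1, h1⟩ := exists_neg_rich G
  obtain ⟨Γ2, hc2, h2⟩ := exists_pos_rich G
  have e1 := hT Γ1 hc1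
  have e2 := hT Γ2 hc2
  have f1 : Γ1.nPos = a ∧ Γ1.nNeg = bb ∧ Γ1.nZero = c := by
    simpa [WSG.inertia, Prod.ext_iff] using e1
  have f2 : Γ2.nPos = a ∧ Γ2.nNeg = bb ∧ Γ2.nZero = c := by
    simpa [WSG.inertia, Prod.ext_iff] using e2
  have hz := bound_nZero hc1
  have hcnt := Γ1.count
  obtain ⟨f1a, f1b, f1c⟩ := f1
  obtain ⟨f2a, f2b, f2c⟩ := f2
  omega

end SGPaper
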